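/- Let q be a power of an odd prime with q ≥ 5, let m ≥ 2 be an integer that does not divide q−1 and such that every prime factor of m divides q−1 and, if 4 divides m, then 4 divides q−1. Let l = ord_m(q) be the multiplicative order of q modulo m. Then: (i) l divides m, and setting k = m/l, k divides q−1; (ii) l is coprime with (q−1)/k; and (iii) the cyclic subgroup generated by the residue class of q in the group (ℤ/mℤ)^* of units modulo m equals the set {(ik+1) mod m : i = 0, 1, …, l−1}. -/

import Mathlib

lemma aux_geom (q n : ℕ) (hq : 1 ≤ q) :
    q ^ n - 1 = (∑ i ∈ Finset.range n, q ^ i) * (q - 1) := by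
  have h1 : (1:ℕ) ≤ q ^ n := Nat.one_le_pow _ _ hq
  have hgeo := geom_sum_mul (x := (q:ℤ)) n
  have : ((q ^ n - 1 : ℕ) : ℤ) = (((∑ i ∈ Finset.range n, q ^ i) * (q - 1) : ℕ) : ℤ) := by
    push_cast [Nat.cast_sub h1, Nat.cast_sub hq]
    linarith [hgeo]
  exact_mod_cast this

lemma aux_lte {p q n : ℕ} (hp : p.Prime) (hq : 5 ≤ q) (hn : n ≠ 0)
    (hpq : p ∣ q - 1) (h4 : p = 2 → 4 ∣ q - 1) :
    padicValNat p (q ^ n - 1) = padicValNat p (q - 1) + padicValNat p n := by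
  haveI : Fact p.Prime := ⟨hp⟩
  have hq1 : (1:ℕ) < q := by omega
  have hpq' : ¬ p ∣ q := by
    intro h
    have h1 : p ∣ q - (q - 1) := Nat.dvd_sub h hpq
    have h2 : q - (q - 1) = 1 := by omega
    rw [h2, Nat.dvd_one] at h1
    exact hp.one_lt.ne' h1
  rcases hp.eq_two_or_odd' with rfl | hodd
  · have h4 := h4 rfl
    have hqodd : ¬ 2 ∣ q := hpq'
    rcases Nat.even_or_odd n with hev | hno
    · have key := padicValNat.pow_two_sub_pow (x := q) (y := 1) hq1 (by simpa using hpq)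
        (by simpa using hqodd) hn hev
      simp only [one_pow] at key
      have hv1 : padicValNat 2 (q + 1) = 1 := by
        obtain ⟨t, ht⟩ := h4
        have hqt : q + 1 = 2 * (2 * t + 1) := by omega
        rw [hqt, padicValNat.mul (by norm_num) (by omega), padicValNat.self (by norm_num),
          padicValNat.eq_zero_of_not_dvd (by omega)]
      omega
    · have hge := aux_geom q n (by omega)
      have hGodd : ¬ 2 ∣ (∑ i ∈ Finset.range n, q ^ i) := by
        have hmod : (∑ i ∈ Finset.range n, q ^ i) % 2 = 1 := by
          rw [Finset.sum_nat_mod]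
          have : ∀ i ∈ Finset.range n, q ^ i % 2 = 1 := by
            intro i _
            rw [Nat.pow_mod]
            have : q % 2 = 1 := Nat.odd_iff.mp ?_
            · rw [this, one_pow]; norm_num
            · exact Nat.odd_iff.mpr (by omega)
          rw [Finset.sum_congr rfl this]
          simp [Finset.sum_const, Nat.odd_iff.mp hno]
        omega
      rw [hge, padicValNat.mul (by
          intro h; exact hGodd (h ▸ dvd_zero 2)) (by omega),
        padicValNat.eq_zero_of_not_dvd hGodd,
        padicValNat.eq_zero_of_not_dvd ((Nat.two_dvd_ne_zero).mpr (Nat.odd_iff.mp hno))]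
      omega
  · have := padicValNat.pow_sub_pow (p := p) hodd (x := q) (y := 1) hq1 (by simpa using hpq)
      hpq' hn
    simpa using this

/-- Lemma 2: with `l = ord_m q` and `k = m / l`, we have `l ∣ m`, `k ∣ q - 1`,
`gcd((q-1)/k, l) = 1`, and the cyclic subgroup generated by `q` in `(ℤ/mℤ)ˣ`
equals `{(ik + 1) mod m : i = 0, …, l - 1}`. -/
theorem order_divisor_decomposition
    (q m : ℕ)
    (hodd : ∃ p n : ℕ, p.Prime ∧ Odd p ∧ q = p ^ n)
    (hq5 : 5 ≤ q)
    (hm2 : 2 ≤ m)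
    (hmndvd : ¬ m ∣ (q - 1))
    (hprime : ∀ p : ℕ, p.Prime → p ∣ m → p ∣ (q - 1))
    (h4 : 4 ∣ m → 4 ∣ (q - 1))
    (l : ℕ) (hl : l = orderOf ((q : ZMod m))) :
    l ∣ m ∧ (m / l) ∣ (q - 1) ∧ Nat.Coprime ((q - 1) / (m / l)) l ∧
      ∀ x : ZMod m, x ∈ Submonoid.powers ((q : ZMod m)) ↔
        ∃ i < l, x = ((i * (m / l) + 1 : ℕ) : ZMod m) := by
  have hm0 : m ≠ 0 := by omega
  have hq10 : q - 1 ≠ 0 := by omega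
  set k := Nat.gcd m (q - 1) with hkdef
  set L := m / k with hLdef
  have hkm : k ∣ m := Nat.gcd_dvd_left _ _
  have hkq : k ∣ q - 1 := Nat.gcd_dvd_right _ _
  have hk0 : k ≠ 0 := fun h => hm0 (Nat.eq_zero_of_gcd_eq_zero_left h)
  have hL0 : L ≠ 0 := by
    rw [hLdef]
    exact Nat.div_ne_zero_iff.mpr ⟨hk0, Nat.le_of_dvd (by omega) hkm⟩
  have hLm : L ∣ m := Nat.div_dvd_of_dvd hkm
  have hkL : k * L = m := Nat.mul_div_cancel' hkm
  -- per prime facts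
  have hfk : k.factorization = m.factorization ⊓ (q - 1).factorization :=
    Nat.factorization_gcd hm0 hq10
  have hfL : L.factorization = m.factorization - k.factorization :=
    Nat.factorization_div hkm
  have hqn0 : ∀ n : ℕ, n ≠ 0 → q ^ n - 1 ≠ 0 := by
    intro n hn
    have := Nat.one_lt_pow hn (show 1 < q by omega)
    omega
  -- the LTE valuation at primes dividing m with a < b
  have hval : ∀ p n : ℕ, p.Prime → p ∣ m → n ≠ 0 →
      (q - 1).factorization p < m.factorization p →
      (q ^ n - 1).factorization p = (q - 1).factorization p + n.factorization p := by
    intro p n hp hpm hn hab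
    have ha1 : 0 < (q - 1).factorization p :=
      hp.factorization_pos_of_dvd hq10 (hprime p hp hpm)
    have h4' : p = 2 → 4 ∣ q - 1 := by
      rintro rfl
      refine h4 (dvd_trans ?_ (Nat.ordProj_dvd m 2))
      have : 2 ≤ m.factorization 2 := by omega
      calc (4:ℕ) = 2 ^ 2 := by norm_num
        _ ∣ 2 ^ m.factorization 2 := pow_dvd_pow 2 this
    rw [Nat.factorization_def _ hp, Nat.factorization_def _ hp, Nat.factorization_def _ hp]
    exact aux_lte hp hq5 hn (hprime p hp hpm) h4'
  -- A1
  have hA1 : m ∣ q ^ L - 1 := by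
    rw [← Nat.factorization_le_iff_dvd hm0 (hqn0 L hL0), Finsupp.le_iff]
    intro p hps
    have hp : p.Prime := Nat.prime_of_mem_primeFactors (by rwa [← Nat.support_factorization])
    have hpm : p ∣ m := Nat.dvd_of_mem_primeFactors (by rwa [← Nat.support_factorization])
    rcases le_or_gt (m.factorization p) ((q - 1).factorization p) with hba | hab
    · calc m.factorization p ≤ (q - 1).factorization p := hba
        _ ≤ (q ^ L - 1).factorization p := by
          exact (Nat.factorization_le_iff_dvd hq10 (hqn0 L hL0)).mpr
            (by simpa using Nat.sub_dvd_pow_sub_pow q 1 L) p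
    · rw [hval p L hp hpm hL0 hab]
      have hLp : L.factorization p = m.factorization p - (q - 1).factorization p := by
        rw [hfL, Finsupp.tsub_apply, hfk, Finsupp.inf_apply]
        omega
      omega
  -- A2
  have hA2 : ∀ n : ℕ, n ≠ 0 → m ∣ q ^ n - 1 → L ∣ n := by
    intro n hn hdvd
    rw [← Nat.factorization_le_iff_dvd hL0 hn, Finsupp.le_iff]
    intro p hps
    have hp : p.Prime := Nat.prime_of_mem_primeFactors (by rwa [← Nat.support_factorization])
    have hpL : p ∣ L := Nat.dvd_of_mem_primeFactors (by rwa [← Nat.support_factorization])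
    have hpm : p ∣ m := hpL.trans hLm
    have hLp : L.factorization p = m.factorization p - min (m.factorization p) ((q-1).factorization p) := by
      rw [hfL, Finsupp.tsub_apply, hfk, Finsupp.inf_apply]
    have hpos : 0 < L.factorization p := hp.factorization_pos_of_dvd hL0 hpL
    have hab : (q - 1).factorization p < m.factorization p := by omega
    have hle : m.factorization p ≤ (q ^ n - 1).factorization p :=
      (Nat.factorization_le_iff_dvd hm0 (hqn0 n hn)).mpr hdvd p
    rw [hval p n hp hpm hn hab] at hle
    omega
  -- pow criterion
  have hqpow : ∀ n : ℕ, ((q : ZMod m)) ^ n = 1 ↔ m ∣ q ^ n - 1 := by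
    intro n
    have h1 : 1 ≤ q ^ n := Nat.one_le_pow _ _ (by omega)
    rw [← Nat.cast_pow, ← Nat.cast_one (R := ZMod m), ZMod.natCast_eq_natCast_iff]
    exact ⟨fun h => (Nat.modEq_iff_dvd' h1).mp h.symm,
      fun h => ((Nat.modEq_iff_dvd' h1).mpr h).symm⟩
  -- order
  have horder : orderOf ((q : ZMod m)) = L := by
    have h1 : ((q : ZMod m)) ^ L = 1 := (hqpow L).mpr hA1
    have h2 : orderOf ((q : ZMod m)) ∣ L := orderOf_dvd_of_pow_eq_one h1
    have ho0 : orderOf ((q : ZMod m)) ≠ 0 := by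
      intro h; rw [h] at h2; exact hL0 (Nat.eq_zero_of_zero_dvd h2)
    have h3 : L ∣ orderOf ((q : ZMod m)) :=
      hA2 _ ho0 ((hqpow _).mp (pow_orderOf_eq_one _))
    exact Nat.dvd_antisymm h2 h3
  have hlL : l = L := hl.trans horder
  have hml : m / l = k := by rw [hlL, hLdef, Nat.div_div_self hkm hm0]
  subst hlL
  rw [hml]
  refine ⟨hLm, hkq, ?_, ?_⟩
  · -- coprimality
    by_contra hnc
    obtain ⟨p, hp, hp1, hp2⟩ := Nat.Prime.not_coprime_iff_dvd.mp hnc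
    have hq1k0 : (q - 1) / k ≠ 0 :=
      Nat.div_ne_zero_iff.mpr ⟨hk0, Nat.le_of_dvd (by omega) hkq⟩
    have hv1 : 0 < ((q - 1) / k).factorization p :=
      hp.factorization_pos_of_dvd hq1k0 hp1
    have hv2 : 0 < L.factorization p := hp.factorization_pos_of_dvd hL0 hp2
    rw [Nat.factorization_div hkq, Finsupp.tsub_apply, hfk, Finsupp.inf_apply] at hv1
    rw [hfL, Finsupp.tsub_apply, hfk, Finsupp.inf_apply] at hv2
    omega
  · classical
    have hfwd : ∀ j : ℕ, ∃ i < L, ((q : ZMod m)) ^ j = ((i * k + 1 : ℕ) : ZMod m) := by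
      intro j
      have hdvd : k ∣ q ^ j - 1 := hkq.trans (by simpa using Nat.sub_dvd_pow_sub_pow q 1 j)
      obtain ⟨t, ht⟩ := hdvd
      have h1j : 1 ≤ q ^ j := Nat.one_le_pow _ _ (by omega)
      have hqj : q ^ j = k * t + 1 := by omega
      refine ⟨t % L, Nat.mod_lt _ (Nat.pos_of_ne_zero hL0), ?_⟩
      have hdm := Nat.div_add_mod t L
      have key : k * t + 1 = (t % L) * k + 1 + m * (t / L) := by
        calc k * t + 1 = k * (L * (t / L) + t % L) + 1 := by rw [hdm]
          _ = (t % L) * k + 1 + (k * L) * (t / L) := by ring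
          _ = (t % L) * k + 1 + m * (t / L) := by rw [hkL]
      have hmeq : (k * t + 1) ≡ ((t % L) * k + 1) [MOD m] := by
        show (k * t + 1) % m = ((t % L) * k + 1) % m
        rw [key, Nat.add_mul_mod_self_left]
      calc ((q : ZMod m)) ^ j = ((q ^ j : ℕ) : ZMod m) := by push_cast; ring
        _ = (((t % L) * k + 1 : ℕ) : ZMod m) := by
            rw [hqj]; exact (ZMod.natCast_eq_natCast_iff _ _ _).mpr hmeq
    set f : ℕ → ZMod m := fun i => ((i * k + 1 : ℕ) : ZMod m) with hfdef
    set S := (Finset.range L).image (fun j => ((q : ZMod m)) ^ j) with hSdef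
    set T := (Finset.range L).image f with hTdef
    have hSsubT : S ⊆ T := by
      intro x hx
      rw [hSdef, Finset.mem_image] at hx
      obtain ⟨j, _, rfl⟩ := hx
      obtain ⟨i, hi, hqi⟩ := hfwd j
      rw [hTdef, Finset.mem_image]
      exact ⟨i, Finset.mem_range.mpr hi, hqi.symm⟩
    have hcardS : S.card = L := by
      rw [hSdef, Finset.card_image_of_injOn, Finset.card_range]
      rw [Finset.coe_range]
      exact horder ▸ pow_injOn_Iio_orderOf
    have hcardT : T.card ≤ L := le_trans (Finset.card_image_le) (by rw [Finset.card_range])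
    have hSeqT : S = T := Finset.eq_of_subset_of_card_le hSsubT (by omega)
    intro x
    rw [Submonoid.mem_powers_iff]
    constructor
    · rintro ⟨n, rfl⟩
      obtain ⟨i, hi, hqi⟩ := hfwd n
      exact ⟨i, hi, hqi⟩
    · rintro ⟨i, hi, rfl⟩
      have hmemT : f i ∈ T := by
        rw [hTdef, Finset.mem_image]
        exact ⟨i, Finset.mem_range.mpr hi, rfl⟩
      rw [← hSeqT, hSdef, Finset.mem_image] at hmemT
      obtain ⟨j, _, hj⟩ := hmemT
      exact ⟨j, hj⟩
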